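/- Let a' be a non-repeating word (no letter occurs twice), and let b, a be words with b ⊑ a' and a ⊑ a'. Then the set of common subsequences {c | c ⊑ b and c ⊑ a} has a unique ⊑-maximal element (the meet b ⊓ a). -/

import Mathlib

private lemma filter_mem_eq {α : Type*} [DecidableEq α] :
    ∀ {l s : List α}, l.Nodup → List.Sublist s l → l.filter (· ∈ s) = s := by
  intro l
  induction l with
  | nil => intro s _ hs; simpa using List.sublist_nil.mp hs
  | cons x l ih =>
    intro s hnd hs
    rw [List.nodup_cons] at hnd
    cases hs with
    | cons _ h =>
      have hxs : x ∉ s := fun hmem => hnd.1 (h.subset hmem)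
      rw [List.filter_cons_of_neg (by simpa using hxs), ih hnd.2 h]
    | cons_cons t h =>
      rename_i t
      have heq : l.filter (· ∈ x :: t) = l.filter (· ∈ t) := by
        apply List.filter_congr
        intro y hy
        have hyx : y ≠ x := fun e => hnd.1 (e ▸ hy)
        simp [hyx]
      rw [List.filter_cons_of_pos (by simp), heq, ih hnd.2 h]

private lemma meet_sublist {α : Type*} [DecidableEq α] {a' b a : List α}
    (hnd : a'.Nodup) (hb : List.Sublist b a') :
    List.Sublist (a'.filter (fun x => x ∈ b ∧ x ∈ a)) b := by
  have h1 : List.Sublist (a'.filter (fun x => x ∈ b ∧ x ∈ a)) (a'.filter (· ∈ b)) := by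
    apply List.monotone_filter_right
    intro x hx
    simp only [decide_eq_true_eq] at *
    exact hx.1
  rwa [filter_mem_eq hnd hb] at h1

private lemma sublist_meet {α : Type*} [DecidableEq α] {a' b a d : List α}
    (hnd : a'.Nodup) (hb : List.Sublist b a')
    (hdb : List.Sublist d b) (hda : List.Sublist d a) :
    List.Sublist d (a'.filter (fun x => x ∈ b ∧ x ∈ a)) := by
  have hd : a'.filter (· ∈ d) = d := filter_mem_eq hnd (hdb.trans hb)
  rw [← hd]
  apply List.monotone_filter_right
  intro x hx
  simp only [decide_eq_true_eq] at *
  exact ⟨hdb.subset hx, hda.subset hx⟩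

/-- if `a'` is non-repeating and `b ⊑ a'`, `a ⊑ a'`, then the set
of common subsequences of `b` and `a` has a unique `⊑`-maximal element, namely
a greatest common subsequence (the meet `b ⊓ a`). -/
theorem unique_maximal_common_subsequence {α : Type*} (a' b a : List α)
    (hnd : a'.Nodup) (hb : List.Sublist b a') (ha : List.Sublist a a') :
    ∃! c : List α, List.Sublist c b ∧ List.Sublist c a ∧ ∀ d : List α, List.Sublist d b → List.Sublist d a → List.Sublist d c := by
  classical
  have hcb := meet_sublist (a := a) hnd hb
  have hca : List.Sublist (a'.filter (fun x => x ∈ b ∧ x ∈ a)) a := by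
    have := meet_sublist (a := b) hnd ha
    have heq : a'.filter (fun x => x ∈ a ∧ x ∈ b) = a'.filter (fun x => x ∈ b ∧ x ∈ a) := by
      apply List.filter_congr; intro y _; simp [and_comm]
    rwa [heq] at this
  refine ⟨a'.filter (fun x => x ∈ b ∧ x ∈ a), ⟨hcb, hca, fun d hdb hda => sublist_meet hnd hb hdb hda⟩, ?_⟩
  rintro c ⟨h1, h2, hmax⟩
  exact (sublist_meet hnd hb h1 h2).antisymm (hmax _ hcb hca)
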